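/- Let (X, d_X, ν_X) and (Y, d_Y, ν_Y) be compact metric spaces with Borel probability measures whose Gromov–Hausdorff–Prokhorov distance is strictly less than ε' > 0. Then for all ε > 0, ρ_ε^X ≤ ρ_{ε+2ε'}^Y + ε', where ρ_ε^Z := inf_{z ∈ Z} ν_Z(C_ε(z)) and C_ε(z) is the closed ε-ball around z. -/

import Mathlib

open MeasureTheory Metric Set

/-- If the GHP distance of two compact metric probability spaces is `< ε'`
(witnessed by isometric embeddings into a common space), then the minimal mass of
closed `ε`-balls in `X` is at most that of closed `(ε + 2ε')`-balls in `Y`, plus `ε'`. -/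
theorem minimal_ball_mass_GHP_bound
    (X Y : Type) [MetricSpace X] [CompactSpace X] [MetricSpace Y] [CompactSpace Y]
    [MeasurableSpace X] [BorelSpace X] [MeasurableSpace Y] [BorelSpace Y]
    (νX : Measure X) (νY : Measure Y)
    [IsProbabilityMeasure νX] [IsProbabilityMeasure νY]
    (ε' : ℝ) (hε' : 0 < ε')
    (h : ∃ (Z : Type) (_ : MetricSpace Z) (_ : MeasurableSpace Z) (_ : BorelSpace Z)
        (φ : X → Z) (ψ : Y → Z), Isometry φ ∧ Isometry ψ ∧
        hausdorffDist (Set.range φ) (Set.range ψ) < ε' ∧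
        levyProkhorovDist (νX.map φ) (νY.map ψ) < ε')
    (ε : ℝ) (hε : 0 < ε) :
    (⨅ x : X, νX (Metric.closedBall x ε)) ≤
      (⨅ y : Y, νY (Metric.closedBall y (ε + 2 * ε'))) + ENNReal.ofReal ε' := by
  obtain ⟨Z, _, _, _, φ, ψ, hφ, hψ, hH, hLP⟩ := h
  -- X is nonempty since it carries a probability measure
  haveI hXne : Nonempty X := by
    by_contra hx
    have : νX Set.univ = 1 := measure_univ
    rw [Set.univ_eq_empty_iff.mpr (not_nonempty_iff.mp hx)] at this
    simp at this
  by_cases hYne : Nonempty Y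
  swap
  · haveI : IsEmpty Y := not_nonempty_iff.mp hYne
    rw [iInf_of_empty (fun y : Y => νY (Metric.closedBall y (ε + 2 * ε')))]
    simp
  have hφm : Measurable φ := hφ.continuous.measurable
  have hψm : Measurable ψ := hψ.continuous.measurable
  haveI : IsProbabilityMeasure (νX.map φ) := Measure.isProbabilityMeasure_map hφm.aemeasurable
  haveI : IsProbabilityMeasure (νY.map ψ) := Measure.isProbabilityMeasure_map hψm.aemeasurable
  have hE : levyProkhorovEDist (νX.map φ) (νY.map ψ) < ENNReal.ofReal ε' := by
    rw [← ENNReal.ofReal_toReal (levyProkhorovEDist_ne_top (νX.map φ) (νY.map ψ))]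
    exact ENNReal.ofReal_lt_ofReal_iff hε' |>.mpr hLP
  -- it suffices to bound for each y
  have key : ∀ y : Y, (⨅ x : X, νX (Metric.closedBall x ε)) ≤
      νY (Metric.closedBall y (ε + 2 * ε')) + ENNReal.ofReal ε' := by
    intro y
    -- find x with dist (ψ y) (φ x) < ε'
    have hfin : EMetric.hausdorffEdist (Set.range ψ) (Set.range φ) ≠ ⊤ := by
      apply Metric.hausdorffEdist_ne_top_of_nonempty_of_bounded
        (Set.range_nonempty ψ) (Set.range_nonempty φ)
      · exact ((isCompact_range hψ.continuous).isBounded)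
      · exact ((isCompact_range hφ.continuous).isBounded)
    have hH' : hausdorffDist (Set.range ψ) (Set.range φ) < ε' := by
      rwa [hausdorffDist_comm]
    obtain ⟨z, hz, hdz⟩ := exists_dist_lt_of_hausdorffDist_lt (Set.mem_range_self y) hH' hfin
    obtain ⟨x, rfl⟩ := hz
    -- ball inclusion in Z via LP bound
    have hB : MeasurableSet (Metric.closedBall (φ x) ε) :=
      measurableSet_closedBall
    have h1 : νX (Metric.closedBall x ε) = (νX.map φ) (Metric.closedBall (φ x) ε) := by
      rw [Measure.map_apply hφm hB]
      congr 1
      ext x'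
      simp [Metric.mem_closedBall, hφ.dist_eq]
    have h2 : (νX.map φ) (Metric.closedBall (φ x) ε) ≤
        (νY.map ψ) (thickening (ENNReal.ofReal ε').toReal (Metric.closedBall (φ x) ε))
          + ENNReal.ofReal ε' :=
      left_measure_le_of_levyProkhorovEDist_lt hE hB
    have hsub : ψ ⁻¹' (thickening (ENNReal.ofReal ε').toReal (Metric.closedBall (φ x) ε)) ⊆
        Metric.closedBall y (ε + 2 * ε') := by
      intro y' hy'
      rw [Set.mem_preimage, Metric.mem_thickening_iff] at hy'
      obtain ⟨w, hw, hdw⟩ := hy'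
      rw [ENNReal.toReal_ofReal hε'.le] at hdw
      rw [Metric.mem_closedBall] at hw ⊢
      have : dist y' y = dist (ψ y') (ψ y) := (hψ.dist_eq _ _).symm
      rw [this]
      calc dist (ψ y') (ψ y) ≤ dist (ψ y') w + dist w (φ x) + dist (φ x) (ψ y) :=
            dist_triangle4 _ _ _ _
        _ ≤ ε' + ε + ε' := by
            have := dist_comm (ψ y) (φ x) ▸ hdz.le
            gcongr
        _ = ε + 2 * ε' := by ring
    have h3 : (νY.map ψ) (thickening (ENNReal.ofReal ε').toReal (Metric.closedBall (φ x) ε)) ≤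
        νY (Metric.closedBall y (ε + 2 * ε')) := by
      rw [Measure.map_apply hψm isOpen_thickening.measurableSet]
      exact measure_mono hsub
    calc (⨅ x' : X, νX (Metric.closedBall x' ε)) ≤ νX (Metric.closedBall x ε) := iInf_le _ x
      _ ≤ _ := by rw [h1]; exact h2.trans (add_le_add_left h3 _)
  calc (⨅ x : X, νX (Metric.closedBall x ε))
      ≤ ⨅ y : Y, (νY (Metric.closedBall y (ε + 2 * ε')) + ENNReal.ofReal ε') := le_iInf key
    _ = (⨅ y : Y, νY (Metric.closedBall y (ε + 2 * ε'))) + ENNReal.ofReal ε' := by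
        rw [ENNReal.iInf_add]
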